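/- Let β(ω) = (1+|ω|)^{-1}. There exist no ψ, φ ∈ L²(ℝ) such that both of the following hold: (a) the functions ξ ↦ ∫_ℝ |ψ̂(β(ω)(ξ−ω))|² β(ω) dω and ξ ↦ ∫_ℝ |φ̂(β(ω)(ξ−ω))|² β(ω) dω are essentially bounded on ℝ (i.e. both systems are Bessel), and (b) ∫_ℝ conj(ψ̂(β(ω)(ξ−ω))) φ̂(β(ω)(ξ−ω)) β(ω) dω = 1 for a.e. ξ ∈ ℝ. In other words, for the affine Weyl–Heisenberg system with η(ω) = ω, β(ω) = (1+|ω|)^{-1} and s = 1 there is no reproducing pair (Ψ,Φ) with Ψ and Φ Bessel whose resolution operator is the identity on L²(ℝ). -/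

import Mathlib

open MeasureTheory ComplexConjugate Metric Filter Set
open scoped InnerProductSpace FourierTransform ENNReal Topology

namespace Stmt18Aux

variable {ξ : ℝ}

private lemma deriv1 (ξ : ℝ) {ω : ℝ} (hω : ω ∈ Ioi (0:ℝ)) :
    HasDerivWithinAt (fun ω => (ξ - ω)/(1+ω)) (-((1+ξ)/(1+ω)^2)) (Ioi 0) ω := by
  have h0 : (1:ℝ) + ω ≠ 0 := by simp only [mem_Ioi] at hω; linarith
  have h1 : HasDerivAt (fun ω : ℝ => ξ - ω) (-1) ω := by
    simpa using (hasDerivAt_id ω).const_sub ξ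
  have h2 : HasDerivAt (fun ω : ℝ => 1 + ω) 1 ω := by
    simpa using (hasDerivAt_id ω).const_add 1
  have := h1.div h2 h0
  apply HasDerivAt.hasDerivWithinAt
  convert this using 1
  · rfl
  · rfl
  · ring

private lemma inj1 (hξ : ξ ≠ -1) : InjOn (fun ω => (ξ - ω)/(1+ω)) (Ioi (0:ℝ)) := by
  intro a ha b hb hab
  simp only [mem_Ioi] at ha hb
  have ha0 : (1:ℝ) + a ≠ 0 := by linarith
  have hb0 : (1:ℝ) + b ≠ 0 := by linarith
  have hξ0 : ξ + 1 ≠ 0 := fun h => hξ (by linarith)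
  field_simp at hab
  have h2 : (ξ+1)*(a-b) = 0 := by linear_combination -hab
  rcases mul_eq_zero.mp h2 with h | h
  · exact absurd h hξ0
  · linarith

private lemma image1a (hξ : -1 < ξ) :
    (fun ω => (ξ - ω)/(1+ω)) '' (Ioi (0:ℝ)) = Ioo (-1) ξ := by
  ext t
  simp only [mem_image, mem_Ioi, mem_Ioo]
  constructor
  · rintro ⟨ω, hω, rfl⟩
    have h0 : (0:ℝ) < 1 + ω := by linarith
    constructor
    · rw [lt_div_iff₀ h0]; nlinarith
    · rw [div_lt_iff₀ h0]; nlinarith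
  · rintro ⟨h1, h2⟩
    have ht0 : (0:ℝ) < 1 + t := by linarith
    refine ⟨(ξ - t)/(1+t), div_pos (by linarith) ht0, ?_⟩
    have h1t : (1:ℝ) + t ≠ 0 := ne_of_gt ht0
    have h1ξ : (1:ℝ) + ξ ≠ 0 := by linarith
    field_simp
    ring

private lemma image1b (hξ : ξ < -1) :
    (fun ω => (ξ - ω)/(1+ω)) '' (Ioi (0:ℝ)) = Ioo ξ (-1) := by
  ext t
  simp only [mem_image, mem_Ioi, mem_Ioo]
  constructor
  · rintro ⟨ω, hω, rfl⟩
    have h0 : (0:ℝ) < 1 + ω := by linarith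
    constructor
    · rw [lt_div_iff₀ h0]; nlinarith
    · rw [div_lt_iff₀ h0]; nlinarith
  · rintro ⟨h1, h2⟩
    have ht0 : (1:ℝ) + t < 0 := by linarith
    have htξ : ξ - t < 0 := by linarith
    refine ⟨(ξ - t)/(1+t), div_pos_of_neg_of_neg htξ ht0, ?_⟩
    have h1t : (1:ℝ) + t ≠ 0 := ne_of_lt ht0
    have h1ξ : (1:ℝ) + ξ ≠ 0 := by linarith
    field_simp
    rw [show (1:ℝ) + t + (ξ - t) = 1 + ξ by ring, div_eq_iff h1ξ]
    ring

private lemma eqOn1 (g : ℝ → ℂ) (hξ : ξ ≠ -1) {ω : ℝ} (hω : ω ∈ Ioi (0:ℝ)) :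
    |(-((1+ξ)/(1+ω)^2))| • (((1 + (ξ - ω)/(1+ω))⁻¹ : ℝ) • g ((ξ - ω)/(1+ω)))
      = (if -1 < ξ then (1:ℝ) else -1) •
        (g ((1+|ω|)⁻¹ * (ξ-ω)) * (((1+|ω|)⁻¹ : ℝ) : ℂ)) := by
  simp only [mem_Ioi] at hω
  have h0 : (0:ℝ) < 1 + ω := by linarith
  have h0' : (1:ℝ) + ω ≠ 0 := ne_of_gt h0
  have habs : |ω| = ω := abs_of_pos hω
  rw [habs]
  have harg : (1+ω)⁻¹ * (ξ-ω) = (ξ - ω)/(1+ω) := by rw [inv_mul_eq_div]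
  have hfrac : 1 + (ξ - ω)/(1+ω) = (1+ξ)/(1+ω) := by field_simp; ring
  have hsm : ∀ (r : ℝ) (z : ℂ), z * (r:ℂ) = r • z := fun r z => by
    rw [Complex.real_smul, mul_comm]
  rw [harg, hfrac, hsm, smul_smul, smul_smul]
  congr 1
  rcases lt_or_gt_of_ne (fun h => hξ (by linarith) : ξ + 1 ≠ 0) with h | h
  · have h1ξ : (1:ℝ) + ξ ≠ 0 := by linarith
    rw [if_neg (by linarith), abs_neg, abs_div, abs_of_pos (by positivity : (0:ℝ) < (1+ω)^2),
      abs_of_neg (by linarith : (1:ℝ)+ξ < 0)]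
    field_simp
  · have h1ξ : (1:ℝ) + ξ ≠ 0 := by linarith
    rw [if_pos (by linarith), abs_neg, abs_div, abs_of_pos (by positivity : (0:ℝ) < (1+ω)^2),
      abs_of_pos (by linarith : (0:ℝ) < 1+ξ)]
    field_simp

lemma piece1_integral (g : ℝ → ℂ) (hξ : ξ ≠ -1) :
    (∫ ω in Ioi (0:ℝ), g ((1+|ω|)⁻¹ * (ξ-ω)) * (((1+|ω|)⁻¹:ℝ):ℂ))
      = ∫ t in (-1:ℝ)..ξ, ((1+t)⁻¹:ℝ) • g t := by
  have himg := integral_image_eq_integral_abs_deriv_smul measurableSet_Ioi (fun ω hω => deriv1 ξ hω)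
    (inj1 hξ) (fun t => ((1+t)⁻¹:ℝ) • g t)
  rw [setIntegral_congr_fun measurableSet_Ioi (fun ω hω => eqOn1 g hξ hω)] at himg
  rcases lt_or_gt_of_ne (fun h => hξ (by linarith) : ξ + 1 ≠ 0) with h | h
  · have hlt : ξ < -1 := by linarith
    rw [image1b hlt] at himg
    simp only [if_neg (by linarith : ¬ (-1:ℝ) < ξ), neg_smul, one_smul, integral_neg] at himg
    rw [intervalIntegral.integral_symm, intervalIntegral.integral_of_le (by linarith),
      integral_Ioc_eq_integral_Ioo, himg, neg_neg]
  · have hgt : (-1:ℝ) < ξ := by linarith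
    rw [image1a hgt] at himg
    simp only [if_pos hgt, one_smul] at himg
    rw [intervalIntegral.integral_of_le (by linarith), integral_Ioc_eq_integral_Ioo, himg]

lemma piece1_integrable (g : ℝ → ℂ) (hξ : ξ ≠ -1)
    (h : IntegrableOn (fun ω => g ((1+|ω|)⁻¹ * (ξ-ω)) * (((1+|ω|)⁻¹:ℝ):ℂ)) (Ioi 0)) :
    IntervalIntegrable (fun t => ((1+t)⁻¹:ℝ) • g t) volume (-1) ξ := by
  rw [intervalIntegrable_iff]
  have hiff := integrableOn_image_iff_integrableOn_abs_deriv_smul measurableSet_Ioi (fun ω hω => deriv1 ξ hω)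
    (inj1 hξ) (fun t => ((1+t)⁻¹:ℝ) • g t)
  have hσ : IntegrableOn
      (fun ω => (if -1 < ξ then (1:ℝ) else -1) • (g ((1+|ω|)⁻¹ * (ξ-ω)) * (((1+|ω|)⁻¹:ℝ):ℂ)))
      (Ioi 0) := h.smul (if -1 < ξ then (1:ℝ) else -1)
  have hw : IntegrableOn (fun t => ((1+t)⁻¹:ℝ) • g t)
      ((fun ω => (ξ - ω)/(1+ω)) '' (Ioi (0:ℝ))) :=
    hiff.mpr (hσ.congr_fun (fun ω hω => (eqOn1 g hξ hω).symm) measurableSet_Ioi)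
  rcases lt_or_gt_of_ne (fun h => hξ (by linarith) : ξ + 1 ≠ 0) with h | h
  · rw [image1b (by linarith)] at hw
    rw [uIoc_of_ge (by linarith)]
    exact (integrableOn_Ioc_iff_integrableOn_Ioo).mpr hw
  · rw [image1a (by linarith)] at hw
    rw [uIoc_of_le (by linarith)]
    exact (integrableOn_Ioc_iff_integrableOn_Ioo).mpr hw

private lemma neg_swap (g : ℝ → ℂ) (ξ : ℝ) (ω : ℝ) :
    g ((1+|(-ω)|)⁻¹ * (ξ - (-ω))) * (((1+|(-ω)|)⁻¹:ℝ):ℂ)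
      = (fun u => g (-u)) ((1+|ω|)⁻¹ * ((-ξ)-ω)) * (((1+|ω|)⁻¹:ℝ):ℂ) := by
  simp only [abs_neg]
  congr 2
  ring

lemma piece2_integral (g : ℝ → ℂ) (hξ : ξ ≠ 1) :
    (∫ ω in Iio (0:ℝ), g ((1+|ω|)⁻¹ * (ξ-ω)) * (((1+|ω|)⁻¹:ℝ):ℂ))
      = ∫ t in (1:ℝ)..ξ, ((t-1)⁻¹:ℝ) • g t := by
  have h1 : (∫ ω in Iio (0:ℝ), g ((1+|ω|)⁻¹ * (ξ-ω)) * (((1+|ω|)⁻¹:ℝ):ℂ))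
      = ∫ ω in Ioi (0:ℝ), (fun u => g (-u)) ((1+|ω|)⁻¹ * ((-ξ)-ω)) * (((1+|ω|)⁻¹:ℝ):ℂ) := by
    rw [← integral_Iic_eq_integral_Iio]
    have := integral_comp_neg_Ioi (0:ℝ)
      (fun ω => g ((1+|ω|)⁻¹ * (ξ-ω)) * (((1+|ω|)⁻¹:ℝ):ℂ))
    rw [neg_zero] at this
    rw [← this]
    exact setIntegral_congr_fun measurableSet_Ioi (fun ω _ => neg_swap g ξ ω)
  rw [h1, piece1_integral (fun u => g (-u)) (by intro h; exact hξ (by linarith))]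
  have h2 : ∀ t : ℝ, ((1+t)⁻¹:ℝ) • g (-t) = (fun s => ((1-s)⁻¹:ℝ) • g s) (-t) := by
    intro t; simp [sub_neg_eq_add]
  rw [intervalIntegral.integral_congr (fun t _ => h2 t)]
  rw [show (∫ x in (-1:ℝ)..(-ξ), (fun s => ((1-s)⁻¹:ℝ) • g s) (-x))
      = ∫ x in (ξ:ℝ)..(1:ℝ), ((1-x)⁻¹:ℝ) • g x by
    simpa using intervalIntegral.integral_comp_neg (f := fun s => ((1-s)⁻¹:ℝ) • g s)
      (a := -1) (b := -ξ)]
  have h3 : ∀ s : ℝ, ((s-1)⁻¹:ℝ) • g s = -(((1-s)⁻¹:ℝ) • g s) := by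
    intro s; rw [← neg_smul, ← inv_neg, neg_sub]
  rw [intervalIntegral.integral_symm]
  simp only [h3, intervalIntegral.integral_neg]

lemma piece2_integrable (g : ℝ → ℂ) (hξ : ξ ≠ 1)
    (h : IntegrableOn (fun ω => g ((1+|ω|)⁻¹ * (ξ-ω)) * (((1+|ω|)⁻¹:ℝ):ℂ)) (Iio 0)) :
    IntervalIntegrable (fun t => ((t-1)⁻¹:ℝ) • g t) volume 1 ξ := by
  have A : MeasurableEmbedding (fun x : ℝ => -x) :=
    (Homeomorph.neg ℝ).isClosedEmbedding.measurableEmbedding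
  have hmap : (volume : Measure ℝ).restrict (Ioi 0)
      = ((volume : Measure ℝ).restrict (Iio 0)).map (fun x : ℝ => -x) := by
    have : (fun x : ℝ => -x) ⁻¹' (Ioi 0) = Iio 0 := by ext x; simp
    rw [← Measure.map_neg_eq_self (volume : Measure ℝ),
      Measure.restrict_map measurable_neg measurableSet_Ioi, this,
      Measure.map_neg_eq_self (volume : Measure ℝ)]
  have hneg : IntegrableOn
      (fun ω => (fun u => g (-u)) ((1+|ω|)⁻¹ * ((-ξ)-ω)) * (((1+|ω|)⁻¹:ℝ):ℂ)) (Ioi 0) := by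
    have : IntegrableOn
        (fun ω => g ((1+|(-ω)|)⁻¹ * (ξ - (-ω))) * (((1+|(-ω)|)⁻¹:ℝ):ℂ)) (Ioi 0) := by
      unfold IntegrableOn
      rw [hmap, A.integrable_map_iff]
      exact h.congr (Filter.Eventually.of_forall fun x => by
        simp only [Function.comp_apply, neg_neg])
    exact this.congr_fun (fun ω _ => neg_swap g ξ ω) measurableSet_Ioi
  have hint := piece1_integrable (fun u => g (-u)) (by intro hh; exact hξ (by linarith)) hneg
  -- hint : IntervalIntegrable (fun t => (1+t)⁻¹ • g (-t)) volume (-1) (-ξ)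
  have h2 : (fun t : ℝ => ((1+t)⁻¹:ℝ) • g (-t)) = (fun s => ((1-s)⁻¹:ℝ) • g s) ∘ (fun t => -t) := by
    funext t; simp [sub_neg_eq_add]
  rw [h2] at hint
  have hint2 : IntervalIntegrable (fun s => ((1-s)⁻¹:ℝ) • g s) volume 1 ξ := by
    rw [IntervalIntegrable.iff_comp_neg]
    exact hint
  have h3 : (fun s : ℝ => ((s-1)⁻¹:ℝ) • g s) = fun s => -(((1-s)⁻¹:ℝ) • g s) := by
    funext s; rw [← neg_smul, ← inv_neg, neg_sub]
  rw [h3]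
  exact hint2.symm.neg.symm
lemma vanish_ae {f : ℝ → ℂ} (hf : Integrable f (volume : Measure ℝ))
    (h : ∀ c d : ℝ, (∫ t in c..d, f t) = 0) : f =ᵐ[volume] 0 := by
  have key := IsUnifLocDoublingMeasure.ae_tendsto_average (μ := (volume : Measure ℝ))
      (f := f) hf.locallyIntegrable 1
  filter_upwards [key] with x hx
  have hδ : Tendsto (fun j : ℕ => (1 : ℝ)/(j+1)) atTop (𝓝[>] 0) := by
    apply tendsto_nhdsWithin_of_tendsto_nhds_of_eventually_within
    · exact tendsto_one_div_add_atTop_nhds_zero_nat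
    · filter_upwards with j
      have : (0:ℝ) < 1/(j+1) := by positivity
      exact this
  have hmem : ∀ᶠ j : ℕ in atTop, x ∈ closedBall x (1 * ((1:ℝ)/(j+1))) := by
    filter_upwards with j
    apply mem_closedBall_self
    positivity
  have h2 := hx (fun _ => x) (fun j : ℕ => (1:ℝ)/(j+1)) hδ hmem
  have h3 : ∀ j : ℕ, (⨍ y in closedBall x ((1:ℝ)/(j+1)), f y) = 0 := by
    intro j
    rw [setAverage_eq]
    have : (∫ y in closedBall x ((1:ℝ)/(j+1)), f y) = 0 := by
      rw [Real.closedBall_eq_Icc, MeasureTheory.integral_Icc_eq_integral_Ioc,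
        ← intervalIntegral.integral_of_le (by linarith [(by positivity : (0:ℝ) < 1/((j:ℝ)+1))])]
      exact h _ _
    rw [this, smul_zero]
  rw [show (fun j : ℕ => ⨍ y in closedBall x ((1:ℝ)/(j+1)), f y) = fun _ => 0 from funext h3] at h2
  have := tendsto_nhds_unique h2 tendsto_const_nhds
  simpa using this
lemma dominated_smul {g : ℝ → ℂ} (hg : Integrable g (volume : Measure ℝ)) {h : ℝ → ℝ}
    (hh : Measurable h) {s : Set ℝ} (hs : MeasurableSet s) {C : ℝ}
    (hb : ∀ t ∈ s, |h t| ≤ C) : IntegrableOn (fun t => h t • g t) s volume := by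
  apply Integrable.mono' ((hg.norm.const_mul C).integrableOn)
  · exact (hh.aestronglyMeasurable.smul hg.aestronglyMeasurable).restrict
  · rw [ae_restrict_iff' hs]
    filter_upwards with t ht
    rw [norm_smul, Real.norm_eq_abs]
    exact mul_le_mul_of_nonneg_right (hb t ht) (norm_nonneg _)

lemma exists_in_Ioo {P : ℝ → Prop} (hP : ∀ᵐ ξ ∂(volume : Measure ℝ), P ξ) {a b : ℝ}
    (hab : a < b) : ∃ ξ ∈ Set.Ioo a b, P ξ := by
  by_contra hcon
  push_neg at hcon
  have h0 : volume (Set.Ioo a b) = 0 :=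
    measure_mono_null (fun x hx => hcon x hx) (ae_iff.mp hP)
  rw [Real.volume_Ioo] at h0
  exact absurd h0 (ENNReal.ofReal_pos.mpr (by linarith)).ne'


end Stmt18Aux

open Stmt18Aux

/-- (No Bessel reproducing pair with identity resolution operator for
the affine Weyl–Heisenberg system with `η(ω) = ω`, `β(ω) = (1+|ω|)⁻¹`, `s = 1`.)
With `F` the Fourier–Plancherel transform on `L²(ℝ)`, there are no `ψ, φ ∈ L²(ℝ)`
(with Plancherel transform representatives `ψhat, φhat`) such that both systems are
Bessel, i.e. `ξ ↦ ∫ |ψhat(β(ω)(ξ-ω))|² β(ω) dω` and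
`ξ ↦ ∫ |φhat(β(ω)(ξ-ω))|² β(ω) dω` are essentially bounded, and the symbol is
identically one: `∫ conj(ψhat(β(ω)(ξ-ω))) φhat(β(ω)(ξ-ω)) β(ω) dω = 1` for a.e. `ξ`;
i.e. no such reproducing pair has resolution operator the identity on `L²(ℝ)`. -/
theorem stmt_18
    (F : Lp ℂ 2 (volume : Measure ℝ) ≃ₗᵢ[ℂ] Lp ℂ 2 (volume : Measure ℝ))
    (hF : ∀ (f : ℝ → ℂ) (hf1 : Integrable f volume) (hf2 : MemLp f 2 volume),
        (F (hf2.toLp f) : ℝ → ℂ) =ᵐ[volume] 𝓕 f) :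
    ¬ ∃ (ψ φ : ℝ → ℂ) (hψ : MemLp ψ 2 volume) (hφ : MemLp φ 2 volume)
        (ψhat φhat : ℝ → ℂ),
      (F (hψ.toLp ψ) : ℝ → ℂ) =ᵐ[volume] ψhat ∧
      (F (hφ.toLp φ) : ℝ → ℂ) =ᵐ[volume] φhat ∧
      (∃ BΨ : ℝ, ∀ᵐ ξ ∂(volume : Measure ℝ),
          (∫ ω : ℝ, ‖ψhat ((1 + |ω|)⁻¹ * (ξ - ω))‖ ^ 2 * (1 + |ω|)⁻¹) ≤ BΨ) ∧
      (∃ BΦ : ℝ, ∀ᵐ ξ ∂(volume : Measure ℝ),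
          (∫ ω : ℝ, ‖φhat ((1 + |ω|)⁻¹ * (ξ - ω))‖ ^ 2 * (1 + |ω|)⁻¹) ≤ BΦ) ∧
      (∀ᵐ ξ ∂(volume : Measure ℝ),
          (∫ ω : ℝ, conj (ψhat ((1 + |ω|)⁻¹ * (ξ - ω))) *
            φhat ((1 + |ω|)⁻¹ * (ξ - ω)) * (((1 + |ω|)⁻¹ : ℝ) : ℂ)) = 1) := by
  rintro ⟨ψ, φ, hψ, hφ, u, v, hueq, hveq, -, -, hsym⟩
  -- the product function
  set g : ℝ → ℂ := fun t => conj (u t) * v t with hgdef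
  have hu2 : MemLp u 2 volume := (Lp.memLp (F (hψ.toLp ψ))).ae_eq hueq
  have hv2 : MemLp v 2 volume := (Lp.memLp (F (hφ.toLp φ))).ae_eq hveq
  have hg : Integrable g volume := by
    have h2 := MeasureTheory.L2.integrable_inner (𝕜 := ℂ) (hu2.toLp u) (hv2.toLp v)
    apply h2.congr
    filter_upwards [hu2.coeFn_toLp, hv2.coeFn_toLp] with t h1 h2'
    simp [hgdef, h1, h2', RCLike.inner_apply, mul_comm]
  -- a.e. goodness
  have hgood : ∀ᵐ ξ : ℝ, Integrable (fun ω : ℝ => g ((1 + |ω|)⁻¹ * (ξ - ω)) *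
        (((1 + |ω|)⁻¹ : ℝ) : ℂ)) volume ∧
      (∫ ω : ℝ, g ((1 + |ω|)⁻¹ * (ξ - ω)) * (((1 + |ω|)⁻¹ : ℝ) : ℂ)) = 1 := by
    filter_upwards [hsym] with ξ h
    refine ⟨?_, h⟩
    by_contra hni
    rw [integral_undef hni] at h
    exact one_ne_zero h.symm
  -- pick good points
  obtain ⟨ξp, hξpmem, hξpI, hξpV⟩ : ∃ ξ' ∈ Set.Ioo (1:ℝ) 3,
      Integrable (fun ω : ℝ => g ((1 + |ω|)⁻¹ * (ξ' - ω)) * (((1 + |ω|)⁻¹ : ℝ) : ℂ)) volume ∧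
      (∫ ω : ℝ, g ((1 + |ω|)⁻¹ * (ξ' - ω)) * (((1 + |ω|)⁻¹ : ℝ) : ℂ)) = 1 := by
    obtain ⟨ξ', h1, h2⟩ := exists_in_Ioo hgood (by norm_num : (1:ℝ) < 3)
    exact ⟨ξ', h1, h2⟩
  obtain ⟨ξm, hξmmem, hξmI, hξmV⟩ : ∃ ξ' ∈ Set.Ioo (-3:ℝ) (-1),
      Integrable (fun ω : ℝ => g ((1 + |ω|)⁻¹ * (ξ' - ω)) * (((1 + |ω|)⁻¹ : ℝ) : ℂ)) volume ∧
      (∫ ω : ℝ, g ((1 + |ω|)⁻¹ * (ξ' - ω)) * (((1 + |ω|)⁻¹ : ℝ) : ℂ)) = 1 := by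
    obtain ⟨ξ', h1, h2⟩ := exists_in_Ioo hgood (by norm_num : (-3:ℝ) < -1)
    exact ⟨ξ', h1, h2⟩
  obtain ⟨hξp1, hξp3⟩ := hξpmem
  obtain ⟨hξm3, hξm1⟩ := hξmmem
  have hξpne1 : ξp ≠ -1 := by linarith
  have hξpne2 : ξp ≠ 1 := by linarith
  have hξmne1 : ξm ≠ -1 := by linarith
  have hξmne2 : ξm ≠ 1 := by linarith
  -- global integrability of the two weighted functions
  have hmeas1 : Measurable fun t : ℝ => (1+t)⁻¹ := (measurable_const.add measurable_id).inv
  have hmeas2 : Measurable fun t : ℝ => (t-1)⁻¹ := (measurable_id.sub measurable_const).inv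
  have hw1 : Integrable (fun t => ((1+t)⁻¹:ℝ) • g t) volume := by
    have ha := intervalIntegrable_iff.mp (piece1_integrable g hξpne1 hξpI.integrableOn)
    rw [uIoc_of_le (by linarith : (-1:ℝ) ≤ ξp)] at ha
    have hb := intervalIntegrable_iff.mp (piece1_integrable g hξmne1 hξmI.integrableOn)
    rw [uIoc_of_ge (by linarith : ξm ≤ (-1:ℝ))] at hb
    have hc : IntegrableOn (fun t => ((1+t)⁻¹:ℝ) • g t) (Set.Ioo ξm ξp)ᶜ volume := by
      apply dominated_smul hg hmeas1
        measurableSet_Ioo.compl (C := (min 1 (-(1+ξm)))⁻¹)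
      intro t ht
      have hmin : (0:ℝ) < min 1 (-(1+ξm)) := lt_min (by norm_num) (by linarith)
      rw [abs_inv]
      apply inv_anti₀ hmin
      rcases not_and_or.mp ht with h' | h'
      · push_neg at h'
        have : t ≤ ξm := h'
        rw [abs_of_neg (by linarith : 1 + t < 0)]
        exact le_trans (min_le_right _ _) (by linarith)
      · push_neg at h'
        have : ξp ≤ t := h'
        rw [abs_of_pos (by linarith : (0:ℝ) < 1 + t)]
        exact le_trans (min_le_left _ _) (by linarith)
    rw [← integrableOn_univ]
    apply ((ha.union hb).union hc).mono_set
    intro x _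
    by_cases hx : x ∈ Set.Ioo ξm ξp
    · rcases le_or_gt x (-1) with h' | h'
      · exact Or.inl (Or.inr ⟨hx.1, h'⟩)
      · exact Or.inl (Or.inl ⟨h', le_of_lt hx.2⟩)
    · exact Or.inr hx
  have hw2 : Integrable (fun t => ((t-1)⁻¹:ℝ) • g t) volume := by
    have ha := intervalIntegrable_iff.mp (piece2_integrable g hξpne2 hξpI.integrableOn)
    rw [uIoc_of_le (by linarith : (1:ℝ) ≤ ξp)] at ha
    have hb := intervalIntegrable_iff.mp (piece2_integrable g hξmne2 hξmI.integrableOn)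
    rw [uIoc_of_ge (by linarith : ξm ≤ (1:ℝ))] at hb
    have hc : IntegrableOn (fun t => ((t-1)⁻¹:ℝ) • g t) (Set.Ioo ξm ξp)ᶜ volume := by
      apply dominated_smul hg hmeas2
        measurableSet_Ioo.compl (C := (min 1 (ξp-1))⁻¹)
      intro t ht
      have hmin : (0:ℝ) < min 1 (ξp-1) := lt_min (by norm_num) (by linarith)
      rw [abs_inv]
      apply inv_anti₀ hmin
      rcases not_and_or.mp ht with h' | h'
      · push_neg at h'
        have : t ≤ ξm := h'
        rw [abs_of_neg (by linarith : t - 1 < 0)]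
        exact le_trans (min_le_left _ _) (by linarith)
      · push_neg at h'
        have : ξp ≤ t := h'
        rw [abs_of_nonneg (by linarith : (0:ℝ) ≤ t - 1)]
        exact le_trans (min_le_right _ _) (by linarith)
    rw [← integrableOn_univ]
    apply ((ha.union hb).union hc).mono_set
    intro x _
    by_cases hx : x ∈ Set.Ioo ξm ξp
    · rcases le_or_gt x 1 with h' | h'
      · exact Or.inl (Or.inr ⟨hx.1, h'⟩)
      · exact Or.inl (Or.inl ⟨h', le_of_lt hx.2⟩)
    · exact Or.inr hx
  -- the symbol function
  set m : ℝ → ℂ := fun ξ' => (∫ t in (-1:ℝ)..ξ', ((1+t)⁻¹:ℝ) • g t)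
      + ∫ t in (1:ℝ)..ξ', ((t-1)⁻¹:ℝ) • g t with hmdef
  have hmc : Continuous m := (hw1.continuous_primitive (-1)).add (hw2.continuous_primitive 1)
  have hm1 : m =ᵐ[volume] fun _ => (1:ℂ) := by
    have hne : ∀ᵐ ξ' : ℝ, ξ' ≠ -1 ∧ ξ' ≠ 1 := by
      have hcnt : ({-1, 1} : Set ℝ).Countable :=
        (Set.countable_singleton _).insert _
      filter_upwards [hcnt.ae_notMem volume] with x hx
      simp only [Set.mem_insert_iff, Set.mem_singleton_iff] at hx
      push_neg at hx
      exact hx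
    filter_upwards [hgood, hne] with ξ' h hne'
    have hsplit := integral_add_compl (measurableSet_Iio (a := (0:ℝ))) h.1
    rw [compl_Iio, integral_Ici_eq_integral_Ioi] at hsplit
    rw [hmdef]
    simp only
    rw [← piece1_integral g hne'.1, ← piece2_integral g hne'.2, add_comm]
    rw [hsplit, h.2]
  have hm : m = fun _ => (1:ℂ) := (Continuous.ae_eq_iff_eq volume hmc continuous_const).mp hm1
  -- all interval integrals of the sum vanish
  have hzero : ∀ c d : ℝ, (∫ t in c..d, (((1+t)⁻¹:ℝ) • g t + ((t-1)⁻¹:ℝ) • g t)) = 0 := by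
    intro c d
    rw [intervalIntegral.integral_add hw1.intervalIntegrable hw2.intervalIntegrable]
    have h1 := intervalIntegral.integral_interval_sub_left
      (hw1.intervalIntegrable (a := -1) (b := d)) (hw1.intervalIntegrable (a := -1) (b := c))
    have h2 := intervalIntegral.integral_interval_sub_left
      (hw2.intervalIntegrable (a := 1) (b := d)) (hw2.intervalIntegrable (a := 1) (b := c))
    have hmd : m d = 1 := by rw [hm]
    have hmc' : m c = 1 := by rw [hm]
    rw [hmdef] at hmd hmc'
    simp only at hmd hmc'
    rw [← h1, ← h2]
    rw [sub_add_sub_comm]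
    rw [hmd, hmc', sub_self]
  have hv0 : (fun t => ((1+t)⁻¹:ℝ) • g t + ((t-1)⁻¹:ℝ) • g t) =ᵐ[volume] 0 :=
    vanish_ae (hw1.add hw2) hzero
  have hg0 : ∀ᵐ t : ℝ, g t = 0 := by
    have hcnt : ({0, 1, -1} : Set ℝ).Countable :=
      (((Set.countable_singleton (-1:ℝ)).insert 1).insert 0)
    filter_upwards [hv0, hcnt.ae_notMem volume] with t h1 h2
    simp only [Set.mem_insert_iff, Set.mem_singleton_iff] at h2
    push_neg at h2
    obtain ⟨ht0, ht1, htm1⟩ := h2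
    have hsum : (((1+t)⁻¹ + (t-1)⁻¹ : ℝ)) • g t = 0 := by
      rw [add_smul]
      simpa using h1
    rcases smul_eq_zero.mp hsum with h' | h'
    · exfalso
      have h1t : (1:ℝ) + t ≠ 0 := fun hh => htm1 (by linarith)
      have h2t : t - 1 ≠ 0 := fun hh => ht1 (by linarith)
      field_simp at h'
      -- h' : t - 1 + (1 + t) = 0  or similar
      apply ht0
      linarith
    · exact h'
  -- conclude
  have hw1z : ∀ a b : ℝ, (∫ t in a..b, ((1+t)⁻¹:ℝ) • g t) = 0 := by
    intro a b
    rw [intervalIntegral.integral_congr_ae (g := fun _ => (0:ℂ)) ?_, intervalIntegral.integral_zero]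
    filter_upwards [hg0] with t ht _
    rw [ht, smul_zero]
  have hw2z : ∀ a b : ℝ, (∫ t in a..b, ((t-1)⁻¹:ℝ) • g t) = 0 := by
    intro a b
    rw [intervalIntegral.integral_congr_ae (g := fun _ => (0:ℂ)) ?_, intervalIntegral.integral_zero]
    filter_upwards [hg0] with t ht _
    rw [ht, smul_zero]
  have : m ξp = 1 := by rw [hm]
  rw [hmdef] at this
  simp only at this
  rw [hw1z, hw2z, add_zero] at this
  exact one_ne_zero this.symm
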